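/- Let t be a squarefree positive integer and let (a,b,c) be a triple of nonzero rationals with a^2 + b^2 = c^2 and ab/2 = t. Then the point (x, y) = (tb/(c-a), 2t^2/(c-a)) is a rational point on the elliptic curve y^2 = x^3 - t^2 x with y ≠ 0 (in particular c ≠ a). -/

import Mathlib

theorem triangle_to_elliptic_point (t : ℕ) (ht : 0 < t) (htsf : Squarefree t)
    (a b c : ℚ) (ha : a ≠ 0) (hb : b ≠ 0) (hc : c ≠ 0)
    (hpyth : a ^ 2 + b ^ 2 = c ^ 2) (harea : a * b / 2 = t) :
    c ≠ a ∧
      (2 * (t : ℚ) ^ 2 / (c - a)) ^ 2 =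
        ((t : ℚ) * b / (c - a)) ^ 3 - (t : ℚ) ^ 2 * ((t : ℚ) * b / (c - a)) ∧
      2 * (t : ℚ) ^ 2 / (c - a) ≠ 0 := by
  have ht' : (t : ℚ) ≠ 0 := by exact_mod_cast ht.ne'
  have hca : c ≠ a := by
    intro h
    rw [h] at hpyth
    have : b ^ 2 = 0 := by linarith
    exact hb (pow_eq_zero_iff (by norm_num) |>.mp this)
  have hsub : c - a ≠ 0 := sub_ne_zero.mpr hca
  have hab : a * b = 2 * (t : ℚ) := by linarith
  have key : 4 * (t : ℚ) * (c - a) = b ^ 3 - b * (c - a) ^ 2 := by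
    linear_combination (-b) * hpyth + (-2 * (c - a)) * hab
  refine ⟨hca, ?_, ?_⟩
  · have expand : ((t : ℚ) * b / (c - a)) ^ 3 - (t : ℚ) ^ 2 * ((t : ℚ) * b / (c - a)) =
        (t : ℚ) ^ 3 * (b ^ 3 - b * (c - a) ^ 2) / (c - a) ^ 3 := by
      field_simp
    rw [expand, ← key, div_pow]
    rw [div_eq_div_iff (by positivity) (by positivity)]
    ring
  · exact div_ne_zero (by positivity) hsub
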